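/- Let q_1, ..., q_n : ℝ^n → ℝ be an α-conditioned n-tuple of positive definite quadratic forms. Let L ⊂ ℝ^n be an m-dimensional subspace (1 ≤ m ≤ n), T : L → ℝ^n a linear map with trivial kernel, and τ_1, ..., τ_m > 0 reals. Define p_i(x) = τ_i q_i(Tx) for x ∈ L and i = 1, ..., m. Suppose Σ_{i=1}^m p_i(x) = ‖x‖^2 for all x ∈ L and tr p_i = 1 for all i. Then the m-tuple p_1, ..., p_m is α^4-conditioned, i.e., p_i(x) ≤ α^4 p_j(y) for all i, j and all unit vectors x, y ∈ L. -/

import Mathlib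

open Matrix

/-- Quadratic form scaling under scalar multiplication. -/
lemma quad_smul {n : ℕ} (A : Matrix (Fin n) (Fin n) ℝ) (c : ℝ)
    (w : EuclideanSpace ℝ (Fin n)) :
    (c • w) ⬝ᵥ A *ᵥ (c • w) = c ^ 2 * (w ⬝ᵥ A *ᵥ w) := by
  have : ((c • w : EuclideanSpace ℝ (Fin n)) : Fin n → ℝ) = c • (w : Fin n → ℝ) := rfl
  rw [this, Matrix.mulVec_smul, smul_dotProduct, dotProduct_smul]
  simp [smul_eq_mul]; ring

/-- Cross comparison of quadratic forms at arbitrary nonzero vectors,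
in multiplied form. -/
lemma quad_ratio {n : ℕ} (α : ℝ) (A B : Matrix (Fin n) (Fin n) ℝ)
    (h : ∀ x y : EuclideanSpace ℝ (Fin n), ‖x‖ = 1 → ‖y‖ = 1 →
      x ⬝ᵥ A *ᵥ x ≤ α * (y ⬝ᵥ B *ᵥ y))
    (w w' : EuclideanSpace ℝ (Fin n)) (hw : w ≠ 0) (hw' : w' ≠ 0) :
    ‖w'‖ ^ 2 * (w ⬝ᵥ A *ᵥ w) ≤ α * ‖w‖ ^ 2 * (w' ⬝ᵥ B *ᵥ w') := by
  have h1 : ‖(‖w‖⁻¹ • w : EuclideanSpace ℝ (Fin n))‖ = 1 := norm_smul_inv_norm hw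
  have h2 : ‖(‖w'‖⁻¹ • w' : EuclideanSpace ℝ (Fin n))‖ = 1 := norm_smul_inv_norm hw'
  have := h _ _ h1 h2
  have e1 := quad_smul A ‖w‖⁻¹ w; have e2 := quad_smul B ‖w'‖⁻¹ w'
  simp only [WithLp.ofLp_smul] at e1 e2 this; rw [e1, e2] at this
  have hwn : (0:ℝ) < ‖w‖ := norm_pos_iff.mpr hw
  have hwn' : (0:ℝ) < ‖w'‖ := norm_pos_iff.mpr hw'
  have key : (‖w‖⁻¹) ^ 2 * (w ⬝ᵥ A *ᵥ w) ≤ α * ((‖w'‖⁻¹) ^ 2 * (w' ⬝ᵥ B *ᵥ w')) := this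
  have lhs_eq : ‖w'‖ ^ 2 * (w ⬝ᵥ A *ᵥ w)
      = (‖w‖ ^ 2 * ‖w'‖ ^ 2) * ((‖w‖⁻¹) ^ 2 * (w ⬝ᵥ A *ᵥ w)) := by
    field_simp
  have rhs_eq : α * ‖w‖ ^ 2 * (w' ⬝ᵥ B *ᵥ w')
      = (‖w‖ ^ 2 * ‖w'‖ ^ 2) * (α * ((‖w'‖⁻¹) ^ 2 * (w' ⬝ᵥ B *ᵥ w'))) := by
    field_simp
  rw [lhs_eq, rhs_eq]
  exact mul_le_mul_of_nonneg_left key (by positivity)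

theorem scaled_tuple_conditioned {n m : ℕ} (hm : 1 ≤ m) (hmn : m ≤ n)
    (α : ℝ) (hα : 1 ≤ α)
    (Q : Fin n → Matrix (Fin n) (Fin n) ℝ) (hQ : ∀ i, (Q i).PosDef)
    (hcond : ∀ i j, ∀ x y : EuclideanSpace ℝ (Fin n), ‖x‖ = 1 → ‖y‖ = 1 →
      x ⬝ᵥ Q i *ᵥ x ≤ α * (y ⬝ᵥ Q j *ᵥ y))
    (T : EuclideanSpace ℝ (Fin m) →ₗ[ℝ] EuclideanSpace ℝ (Fin n))
    (hT : Function.Injective T)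
    (τ : Fin m → ℝ) (hτ : ∀ i, 0 < τ i)
    (p : Fin m → EuclideanSpace ℝ (Fin m) → ℝ)
    (hp : ∀ i x, p i x = τ i * (T x ⬝ᵥ Q (i.castLE hmn) *ᵥ T x))
    (hsum : ∀ x : EuclideanSpace ℝ (Fin m), ∑ i, p i x = ‖x‖ ^ 2)
    (htr : ∀ i, ∑ j, p i (EuclideanSpace.single j 1) = 1) :
    ∀ i j, ∀ x y : EuclideanSpace ℝ (Fin m), ‖x‖ = 1 → ‖y‖ = 1 →
      p i x ≤ α ^ 4 * p j y := by
  -- preliminaries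
  have hα0 : (0:ℝ) < α := lt_of_lt_of_le one_pos hα
  have hTne : ∀ z : EuclideanSpace ℝ (Fin m), z ≠ 0 → T z ≠ 0 := by
    intro z hz hTz
    exact hz (hT (by simpa using hTz))
  have hqpos : ∀ (k : Fin n) (w : EuclideanSpace ℝ (Fin n)), w ≠ 0 →
      0 < w ⬝ᵥ Q k *ᵥ w := by
    intro k w hw
    simpa using (hQ k).dotProduct_mulVec_pos (x := w.ofLp) (by simpa using hw)
  -- same-vector comparison: q_i(w) ≤ α q_j(w)
  have hsame : ∀ (a b : Fin n) (w : EuclideanSpace ℝ (Fin n)),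
      w ⬝ᵥ Q a *ᵥ w ≤ α * (w ⬝ᵥ Q b *ᵥ w) := by
    intro a b w
    by_cases hw : w = 0
    · simp [hw]
    · have := quad_ratio α (Q a) (Q b) (hcond a b) w w hw hw
      have hwn : (0:ℝ) < ‖w‖ ^ 2 := pow_pos (norm_pos_iff.mpr hw) 2
      nlinarith
  -- τ comparison: τ a ≤ α * τ b
  have hτcomp : ∀ a b : Fin m, τ a ≤ α * τ b := by
    intro a b
    have hea : ∀ k : Fin m, (EuclideanSpace.single k (1:ℝ) : EuclideanSpace ℝ (Fin m)) ≠ 0 := by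
      intro k h
      have := congrFun (congrArg (fun v : EuclideanSpace ℝ (Fin m) => (v : Fin m → ℝ)) h) k
      simp [EuclideanSpace.single_apply] at this
    set Sa := ∑ k : Fin m, (T (EuclideanSpace.single k 1) ⬝ᵥ Q (a.castLE hmn) *ᵥ
        T (EuclideanSpace.single k 1)) with hSa
    set Sb := ∑ k : Fin m, (T (EuclideanSpace.single k 1) ⬝ᵥ Q (b.castLE hmn) *ᵥ
        T (EuclideanSpace.single k 1)) with hSb
    have hta : τ a * Sa = 1 := by
      rw [hSa, Finset.mul_sum]
      simpa [hp] using htr a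
    have htb : τ b * Sb = 1 := by
      rw [hSb, Finset.mul_sum]
      simpa [hp] using htr b
    have hSba : Sb ≤ α * Sa := by
      rw [hSa, hSb, Finset.mul_sum]
      exact Finset.sum_le_sum fun k _ => hsame _ _ _
    have hSapos : 0 < Sa := by
      rw [hSa]
      refine Finset.sum_pos (fun k _ => hqpos _ _ (hTne _ (hea k))) ?_
      exact Finset.univ_nonempty_iff.mpr (Fin.pos_iff_nonempty.mp hm)
    have hSbpos : 0 < Sb := by
      rw [hSb]
      refine Finset.sum_pos (fun k _ => hqpos _ _ (hTne _ (hea k))) ?_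
      exact Finset.univ_nonempty_iff.mpr (Fin.pos_iff_nonempty.mp hm)
    have h2 : τ a * Sb ≤ α := by
      calc τ a * Sb ≤ τ a * (α * Sa) := by
            exact mul_le_mul_of_nonneg_left hSba (hτ a).le
        _ = α * (τ a * Sa) := by ring
        _ = α := by rw [hta, mul_one]
    have h3 : τ a * Sb ≤ α * (τ b * Sb) := by rw [htb, mul_one]; exact h2
    have h4 : τ a * Sb ≤ (α * τ b) * Sb := by linarith [h3]
    exact le_of_mul_le_mul_right h4 hSbpos
  -- norm comparison for unit x y : ‖Tx‖² ≤ α ‖Ty‖²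
  have hnormcomp : ∀ x y : EuclideanSpace ℝ (Fin m), ‖x‖ = 1 → ‖y‖ = 1 →
      ‖T x‖ ^ 2 ≤ α * ‖T y‖ ^ 2 := by
    intro x y hx hy
    have hxne : x ≠ 0 := fun h => by simp [h] at hx
    have hyne : y ≠ 0 := fun h => by simp [h] at hy
    have hTx := hTne x hxne
    have hTy := hTne y hyne
    have hsx : ∑ k : Fin m, τ k * (T x ⬝ᵥ Q (k.castLE hmn) *ᵥ T x) = 1 := by
      have := hsum x; simp only [hp] at this ⊢; rw [this, hx]; norm_num
    have hsy : ∑ k : Fin m, τ k * (T y ⬝ᵥ Q (k.castLE hmn) *ᵥ T y) = 1 := by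
      have := hsum y; simp only [hp] at this ⊢; rw [this, hy]; norm_num
    -- termwise: ‖Tx‖² q_k(Ty) ≤ α ‖Ty‖² q_k(Tx)
    have hterm : ∀ k : Fin m,
        τ k * (‖T x‖ ^ 2 * (T y ⬝ᵥ Q (k.castLE hmn) *ᵥ T y)) ≤
        τ k * (α * ‖T y‖ ^ 2 * (T x ⬝ᵥ Q (k.castLE hmn) *ᵥ T x)) := by
      intro k
      exact mul_le_mul_of_nonneg_left
        (quad_ratio α (Q (k.castLE hmn)) (Q (k.castLE hmn))
          (hcond (k.castLE hmn) (k.castLE hmn)) (T y) (T x) hTy hTx) (hτ k).le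
    have hsumle := Finset.sum_le_sum fun k (_ : k ∈ Finset.univ) => hterm k
    have hl : ∑ k : Fin m, τ k * (‖T x‖ ^ 2 * (T y ⬝ᵥ Q (k.castLE hmn) *ᵥ T y))
        = ‖T x‖ ^ 2 := by
      calc ∑ k : Fin m, τ k * (‖T x‖ ^ 2 * (T y ⬝ᵥ Q (k.castLE hmn) *ᵥ T y))
          = ‖T x‖ ^ 2 * ∑ k : Fin m, τ k * (T y ⬝ᵥ Q (k.castLE hmn) *ᵥ T y) := by
            rw [Finset.mul_sum]; exact Finset.sum_congr rfl fun k _ => by ring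
        _ = ‖T x‖ ^ 2 := by rw [hsy, mul_one]
    have hr : ∑ k : Fin m, τ k * (α * ‖T y‖ ^ 2 * (T x ⬝ᵥ Q (k.castLE hmn) *ᵥ T x))
        = α * ‖T y‖ ^ 2 := by
      calc ∑ k : Fin m, τ k * (α * ‖T y‖ ^ 2 * (T x ⬝ᵥ Q (k.castLE hmn) *ᵥ T x))
          = (α * ‖T y‖ ^ 2) * ∑ k : Fin m, τ k * (T x ⬝ᵥ Q (k.castLE hmn) *ᵥ T x) := by
            rw [Finset.mul_sum]; exact Finset.sum_congr rfl fun k _ => by ring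
        _ = α * ‖T y‖ ^ 2 := by rw [hsx, mul_one]
    rw [hl, hr] at hsumle
    exact hsumle
  -- main
  intro i j x y hx hy
  have hxne : x ≠ 0 := fun h => by simp [h] at hx
  have hyne : y ≠ 0 := fun h => by simp [h] at hy
  have hTx := hTne x hxne
  have hTy := hTne y hyne
  set a := T x ⬝ᵥ Q (i.castLE hmn) *ᵥ T x with ha
  set b := T y ⬝ᵥ Q (j.castLE hmn) *ᵥ T y with hb
  have hapos : 0 < a := hqpos _ _ hTx
  have hbpos : 0 < b := hqpos _ _ hTy
  -- ‖Ty‖² a ≤ α ‖Tx‖² b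
  have hcross : ‖T y‖ ^ 2 * a ≤ α * ‖T x‖ ^ 2 * b :=
    quad_ratio α (Q (i.castLE hmn)) (Q (j.castLE hmn))
      (hcond (i.castLE hmn) (j.castLE hmn)) (T x) (T y) hTx hTy
  have hnorm : ‖T x‖ ^ 2 ≤ α * ‖T y‖ ^ 2 := hnormcomp x y hx hy
  have hτij : τ i ≤ α * τ j := hτcomp i j
  have hTy2 : (0:ℝ) < ‖T y‖ ^ 2 := pow_pos (norm_pos_iff.mpr hTy) 2
  have hTx2 : (0:ℝ) < ‖T x‖ ^ 2 := pow_pos (norm_pos_iff.mpr hTx) 2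
  -- a ≤ α² b
  have hab : a ≤ α ^ 2 * b := by nlinarith
  rw [hp, hp, ← ha, ← hb]
  -- τ i * a ≤ α⁴ * (τ j * b)
  nlinarith [mul_le_mul hτij hab hapos.le (mul_pos hα0 (hτ j)).le,
    mul_nonneg (mul_nonneg (sub_nonneg.mpr hα) (pow_nonneg hα0.le 3))
      (mul_pos (hτ j) hbpos).le]
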